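/- Let b ∈ ℝ⁴ (real entries) with |b| < 1, δ = 1 − b·b > 0, θ = i√3. Then the matrix Z = ωI + (θ/δ)N (with N as above: N₀₀ = b·b, N₀ⱼ = Nⱼ₀ = −bⱼ, Nᵢⱼ = bᵢbⱼ for i,j ≥ 1) has positive-definite imaginary part; i.e., Z lies in the Siegel upper half space ℍ₅. -/

import Mathlib

open Complex Finset Matrix

/-- The key scalar inequality: the quadratic form of `Im Z` is positive. -/
lemma siegel_quad_pos (d t s q : ℝ) (hd : 0 < d) (hd1 : d ≤ 1)
    (hq : 0 ≤ q) (hcs : s ^ 2 ≤ (1 - d) * q) (hx : t ≠ 0 ∨ 0 < q) :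
    0 < d * (t ^ 2 + q) + 2 * ((1 - d) * t ^ 2 - 2 * t * s + s ^ 2) := by
  rcases hq.eq_or_lt with hq0 | hq'
  · -- q = 0 forces s = 0, and then t ≠ 0 gives positivity
    have hs2 : s ^ 2 = 0 := le_antisymm (by nlinarith) (sq_nonneg s)
    have hs : s = 0 := by
      have := sq_eq_zero_iff.mp hs2
      exact this
    have ht : t ≠ 0 := by
      rcases hx with ht | hq''
      · exact ht
      · exact absurd hq'' (by rw [← hq0]; exact lt_irrefl 0)
    have ht2 : 0 < t ^ 2 := by positivity
    rw [hs, ← hq0]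
    nlinarith [ht2]
  · nlinarith [sq_nonneg ((2 - d) * t - 2 * s),
      mul_le_mul_of_nonneg_left hcs hd.le,
      mul_pos (mul_pos hd hd) hq']

/-- For real `b` with `|b| < 1`, the matrix `Z = ωI + (θ/δ)N` is symmetric and
has positive-definite imaginary part, i.e. it lies in the Siegel upper half
space `ℍ₅`. -/
theorem Z_in_Siegel_real (b : Fin 4 → ℝ)
    (hb : ∑ i, (b i) ^ 2 < 1)
    (δ θ ω : ℂ)
    (hδ : δ = 1 - ∑ i, ((b i : ℂ)) ^ 2)
    (hθ : θ = Complex.I * Real.sqrt 3)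
    (hω : ω = Complex.exp (2 * Real.pi * Complex.I / 3))
    (N Z : Matrix (Option (Fin 4)) (Option (Fin 4)) ℂ)
    (hN : ∀ i j, N i j = match i, j with
      | none, none => ∑ k, ((b k : ℂ)) ^ 2
      | none, some j => -(b j : ℂ)
      | some i, none => -(b i : ℂ)
      | some i, some j => (b i : ℂ) * (b j : ℂ))
    (hZ : Z = ω • (1 : Matrix (Option (Fin 4)) (Option (Fin 4)) ℂ) + (θ / δ) • N) :
    Zᵀ = Z ∧ Matrix.PosDef (Matrix.of fun i j => (Z i j).im) := by
  -- real data
  set B : ℝ := ∑ i, b i ^ 2 with hBdef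
  have hB0 : 0 ≤ B := Finset.sum_nonneg fun i _ => sq_nonneg _
  have hB1 : B < 1 := hb
  have hd : 0 < 1 - B := by linarith
  have hδr : δ = ((1 - B : ℝ) : ℂ) := by rw [hδ, hBdef]; push_cast; ring
  set c : ℝ := Real.sqrt 3 / (1 - B) with hcdef
  have hθδ : θ / δ = (c : ℂ) * Complex.I := by
    rw [hθ, hδr, hcdef]
    push_cast
    field_simp
  have hωim : ω.im = Real.sqrt 3 / 2 := by
    have h1 : (2 * Real.pi * Complex.I / 3) = ((2 * Real.pi / 3 : ℝ) : ℂ) * Complex.I := by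
      push_cast; ring
    have h2 : (2 * Real.pi / 3) = Real.pi - Real.pi / 3 := by ring
    rw [hω, h1, Complex.exp_ofReal_mul_I_im, h2, Real.sin_pi_sub, Real.sin_pi_div_three]
  -- real version of N
  set nr : Option (Fin 4) → Option (Fin 4) → ℝ := fun i j => match i, j with
    | none, none => B
    | none, some j => -b j
    | some i, none => -b i
    | some i, some j => b i * b j with hnr
  have hNr : ∀ i j, N i j = ((nr i j : ℝ) : ℂ) := by
    intro i j
    rw [hN]
    cases i <;> cases j <;> simp [hnr, hBdef]
  -- imaginary parts of entries of Z
  have him : ∀ i j, (Z i j).im = (if i = j then Real.sqrt 3 / 2 else 0) + c * nr i j := by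
    intro i j
    rw [hZ]
    simp only [Matrix.add_apply, Matrix.smul_apply, Matrix.one_apply, smul_eq_mul, hNr, hθδ]
    split_ifs <;> simp [Complex.add_im, Complex.mul_im, hωim]
  -- symmetry
  have hsym : Zᵀ = Z := by
    ext i j
    rw [Matrix.transpose_apply, hZ]
    simp only [Matrix.add_apply, Matrix.smul_apply, Matrix.one_apply, smul_eq_mul, hNr]
    cases i <;> cases j <;> simp [hnr, eq_comm, mul_comm]
  refine ⟨hsym, Matrix.posDef_iff_dotProduct_mulVec.mpr ⟨?_, ?_⟩⟩
  · -- hermitian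
    ext i j
    simp only [Matrix.conjTranspose_apply, Matrix.of_apply, star_trivial]
    have := congrFun (congrFun hsym i) j
    rw [Matrix.transpose_apply] at this
    rw [this]
  · -- positive definiteness
    intro x hx
    have hx' : ∃ i, x i ≠ 0 := by
      by_contra h
      push_neg at h
      exact hx (funext h)
    set t : ℝ := x none with htdef
    set s : ℝ := ∑ i, b i * x (some i) with hsdef
    set q : ℝ := ∑ i, x (some i) ^ 2 with hqdef
    have hq0 : 0 ≤ q := Finset.sum_nonneg fun i _ => sq_nonneg _
    have hkey : dotProduct (star x) ((Matrix.of fun i j => (Z i j).im) *ᵥ x)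
        = Real.sqrt 3 / 2 * (t ^ 2 + q) + c * (B * t ^ 2 - 2 * t * s + s ^ 2) := by
      simp only [star_trivial, dotProduct, Matrix.mulVec, dotProduct, Matrix.of_apply, him,
        Fintype.sum_option, hnr, htdef, hsdef, hqdef, hBdef]
      simp [Fin.sum_univ_four]
      ring
    rw [hkey]
    have hcs : s ^ 2 ≤ B * q := by
      have := Finset.sum_mul_sq_le_sq_mul_sq Finset.univ b (fun i => x (some i))
      simpa [hsdef, hqdef, hBdef] using this
    have hx2 : t ≠ 0 ∨ 0 < q := by
      rcases hx' with ⟨i, hi⟩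
      cases i with
      | none => exact Or.inl hi
      | some i =>
          right
          have : 0 < x (some i) ^ 2 := by positivity
          have hle : x (some i) ^ 2 ≤ q := by
            rw [hqdef]
            exact Finset.single_le_sum (f := fun j => x (some j) ^ 2) (fun j _ => sq_nonneg _) (Finset.mem_univ i)
          linarith
    have hmain := siegel_quad_pos (1 - B) t s q hd (by linarith) hq0
      (by rw [show (1 - (1 - B) : ℝ) = B by ring]; exact hcs) hx2
    have h3 : 0 < Real.sqrt 3 := Real.sqrt_pos.2 (by norm_num)
    have hform : Real.sqrt 3 / 2 * (t ^ 2 + q) + c * (B * t ^ 2 - 2 * t * s + s ^ 2)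
        = (Real.sqrt 3 / (2 * (1 - B))) *
          ((1 - B) * (t ^ 2 + q) + 2 * ((1 - (1 - B)) * t ^ 2 - 2 * t * s + s ^ 2)) := by
      rw [hcdef]
      field_simp
      ring
    rw [hform]
    have hpos : 0 < Real.sqrt 3 / (2 * (1 - B)) := by positivity
    exact mul_pos hpos hmain
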